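/- Let $(X_n : n \in \omega)$ be a sequentially absorbing covering of a first countable topological space $X$ by closed metrizable subspaces $X_n$. Then $X$ is metrizable. -/

import Mathlib

open Filter Topology Set

set_option linter.unusedSectionVars false

namespace SeqAbsorbAux

attribute [local instance] Classical.propDecidable

lemma min1_subadd {b c : ℝ} (hb : 0 ≤ b) (hc : 0 ≤ c) : min 1 (b + c) ≤ min 1 b + min 1 c := by
  rcases le_total 1 b with h1 | h1
  · rw [min_eq_left h1]
    have : (0:ℝ) ≤ min 1 c := le_min zero_le_one hc
    linarith [min_le_left 1 (b+c)]
  · rcases le_total 1 c with h2 | h2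
    · rw [min_eq_left h2]
      have : (0:ℝ) ≤ min 1 b := le_min zero_le_one hb
      linarith [min_le_left 1 (b+c)]
    · rw [min_eq_right h1, min_eq_right h2]
      exact min_le_right _ _

lemma min1_add {a b c : ℝ} (h : a ≤ b + c) (hb : 0 ≤ b) (hc : 0 ≤ c) :
    min 1 a ≤ min 1 b + min 1 c :=
  le_trans (min_le_min le_rfl h) (min1_subadd hb hc)

variable {X : Type*} [TopologicalSpace X]

variable (Xn : ℕ → Set X) (d : ∀ k, Xn k → Xn k → ℝ)

/-- distance extended to all of `X` by zero -/
noncomputable def sd (k : ℕ) (x y : X) : ℝ :=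
  if h : x ∈ Xn k ∧ y ∈ Xn k then d k ⟨x, h.1⟩ ⟨y, h.2⟩ else 0

/-- truncated distance to the "boundary" `Xn k \ interior (Xn k)` -/
noncomputable def rho (k : ℕ) (x : X) : ℝ :=
  if x ∈ interior (Xn k) then
    (if (Xn k \ interior (Xn k)).Nonempty then
      min 1 (sInf ((fun b => sd Xn d k x b) '' (Xn k \ interior (Xn k)))) else 1)
  else 0

noncomputable def Ek (k : ℕ) (x y : X) : ℝ :=
  if x ∈ interior (Xn k) ∧ y ∈ interior (Xn k) then min 1 (sd Xn d k x y) else 2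

/-- the collapse pseudometric at stage `k` -/
noncomputable def Dk (k : ℕ) (x y : X) : ℝ :=
  min (Ek Xn d k x y) (rho Xn d k x + rho Xn d k y)

/-- the final candidate metric -/
noncomputable def DD (x y : X) : ℝ := ∑' k, (1/2 : ℝ)^k * Dk Xn d k x y

section axioms

variable (hd0 : ∀ k a, d k a a = 0) (hdc : ∀ k a b, d k a b = d k b a)
  (hdt : ∀ k a b c, d k a c ≤ d k a b + d k b c)

include hd0 hdc hdt

lemma d_nonneg (k) (a b : Xn k) : 0 ≤ d k a b := by
  nlinarith [hdt k a b a, hd0 k a, hdc k a b]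

lemma sd_nonneg (k) (x y : X) : 0 ≤ sd Xn d k x y := by
  unfold sd; split_ifs with h
  · exact d_nonneg Xn d hd0 hdc hdt k _ _
  · exact le_refl _

lemma sd_comm (k) (x y : X) : sd Xn d k x y = sd Xn d k y x := by
  unfold sd; split_ifs with h1 h2 h2
  · exact hdc k _ _
  · exact absurd ⟨h1.2, h1.1⟩ h2
  · exact absurd ⟨h2.2, h2.1⟩ h1
  · rfl

lemma sd_self (k) (x : X) : sd Xn d k x x = 0 := by
  unfold sd; split_ifs with h
  · exact hd0 k _
  · rfl

lemma sd_mem (k) {x y : X} (hx : x ∈ Xn k) (hy : y ∈ Xn k) :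
    sd Xn d k x y = d k ⟨x, hx⟩ ⟨y, hy⟩ := by
  unfold sd; rw [dif_pos ⟨hx, hy⟩]

lemma sd_triangle (k) {x y z : X} (hx : x ∈ Xn k) (hy : y ∈ Xn k) (hz : z ∈ Xn k) :
    sd Xn d k x z ≤ sd Xn d k x y + sd Xn d k y z := by
  rw [sd_mem Xn d hd0 hdc hdt k hx hz, sd_mem Xn d hd0 hdc hdt k hx hy, sd_mem Xn d hd0 hdc hdt k hy hz]
  exact hdt k _ _ _

lemma rho_nonneg (k) (x : X) : 0 ≤ rho Xn d k x := by
  unfold rho; split_ifs with h1 h2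
  · exact le_min zero_le_one (Real.sInf_nonneg (by
      rintro r ⟨b, hb, rfl⟩
      exact sd_nonneg Xn d hd0 hdc hdt k x b))
  · exact zero_le_one
  · exact le_refl _

lemma rho_le_one (k) (x : X) : rho Xn d k x ≤ 1 := by
  unfold rho; split_ifs with h1 h2
  · exact min_le_left _ _
  · exact le_refl _
  · exact zero_le_one

lemma rho_of_not_mem (k) {x : X} (hx : x ∉ interior (Xn k)) : rho Xn d k x = 0 := by
  unfold rho; rw [if_neg hx]

lemma rho_le_sd_boundary (k) {x : X} (hx : x ∈ Xn k \ interior (Xn k)) (y : X) :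
    rho Xn d k y ≤ sd Xn d k y x := by
  by_cases hy : y ∈ interior (Xn k)
  · unfold rho
    rw [if_pos hy, if_pos ⟨x, hx⟩]
    refine le_trans (min_le_right _ _) (csInf_le ?_ ⟨x, hx, rfl⟩)
    exact ⟨0, by rintro r ⟨b, hb, rfl⟩; exact sd_nonneg Xn d hd0 hdc hdt k y b⟩
  · rw [rho_of_not_mem Xn d hd0 hdc hdt k hy]
    exact sd_nonneg Xn d hd0 hdc hdt k y x

lemma rho_lip (k) {x y : X} (hx : x ∈ interior (Xn k)) (hy : y ∈ interior (Xn k)) :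
    rho Xn d k x ≤ rho Xn d k y + min 1 (sd Xn d k x y) := by
  have hsdnn : ∀ a b : X, 0 ≤ sd Xn d k a b := sd_nonneg Xn d hd0 hdc hdt k
  unfold rho
  rw [if_pos hx, if_pos hy]
  split_ifs with hne
  · have hbdd : BddBelow ((fun b => sd Xn d k y b) '' (Xn k \ interior (Xn k))) :=
      ⟨0, by rintro r ⟨b, hb, rfl⟩; exact hsdnn y b⟩
    have hbdd' : BddBelow ((fun b => sd Xn d k x b) '' (Xn k \ interior (Xn k))) :=
      ⟨0, by rintro r ⟨b, hb, rfl⟩; exact hsdnn x b⟩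
    have key : sInf ((fun b => sd Xn d k x b) '' (Xn k \ interior (Xn k))) ≤
        sInf ((fun b => sd Xn d k y b) '' (Xn k \ interior (Xn k))) + sd Xn d k x y := by
      have h2 : sInf ((fun b => sd Xn d k x b) '' (Xn k \ interior (Xn k))) - sd Xn d k x y ≤
          sInf ((fun b => sd Xn d k y b) '' (Xn k \ interior (Xn k))) := by
        apply le_csInf (hne.image _)
        rintro r ⟨b, hb, rfl⟩
        have h3 : sd Xn d k x b ≤ sd Xn d k x y + sd Xn d k y b :=
          sd_triangle Xn d hd0 hdc hdt k (interior_subset hx) (interior_subset hy) hb.1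
        have h4 : sInf ((fun b => sd Xn d k x b) '' (Xn k \ interior (Xn k))) ≤ sd Xn d k x b :=
          csInf_le hbdd' ⟨b, hb, rfl⟩
        linarith
      linarith
    exact min1_add key (Real.sInf_nonneg (by rintro r ⟨b, hb, rfl⟩; exact hsdnn y b)) (hsdnn x y)
  · have : (0:ℝ) ≤ min 1 (sd Xn d k x y) := le_min zero_le_one (hsdnn x y)
    linarith

lemma Ek_comm (k) (x y : X) : Ek Xn d k x y = Ek Xn d k y x := by
  unfold Ek
  rw [sd_comm Xn d hd0 hdc hdt k x y]
  exact if_congr and_comm rfl rfl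

lemma Ek_nonneg (k) (x y : X) : 0 ≤ Ek Xn d k x y := by
  unfold Ek; split_ifs with h
  · exact le_min zero_le_one (sd_nonneg Xn d hd0 hdc hdt k x y)
  · norm_num

lemma Ek_le_two (k) (x y : X) : Ek Xn d k x y ≤ 2 := by
  unfold Ek; split_ifs with h
  · have := min_le_left 1 (sd Xn d k x y); linarith
  · exact le_refl _

lemma Dk_nonneg (k) (x y : X) : 0 ≤ Dk Xn d k x y :=
  le_min (Ek_nonneg Xn d hd0 hdc hdt k x y)
    (add_nonneg (rho_nonneg Xn d hd0 hdc hdt k x) (rho_nonneg Xn d hd0 hdc hdt k y))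

lemma Dk_le_two (k) (x y : X) : Dk Xn d k x y ≤ 2 :=
  le_trans (min_le_left _ _) (Ek_le_two Xn d hd0 hdc hdt k x y)

lemma Dk_comm (k) (x y : X) : Dk Xn d k x y = Dk Xn d k y x := by
  unfold Dk; rw [Ek_comm Xn d hd0 hdc hdt k x y, add_comm]

lemma Dk_self (k) (x : X) : Dk Xn d k x x = 0 := by
  unfold Dk
  by_cases hx : x ∈ interior (Xn k)
  · have hE : Ek Xn d k x x = 0 := by
      unfold Ek
      rw [if_pos ⟨hx, hx⟩, sd_self Xn d hd0 hdc hdt k x]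
      simp
    rw [hE]
    exact le_antisymm (le_trans (min_le_left _ _) (le_refl _))
      (le_min (le_refl _) (add_nonneg (rho_nonneg Xn d hd0 hdc hdt k x)
        (rho_nonneg Xn d hd0 hdc hdt k x)))
  · rw [rho_of_not_mem Xn d hd0 hdc hdt k hx]
    have := Ek_nonneg Xn d hd0 hdc hdt k x x
    rw [min_eq_right (by linarith)]
    norm_num

lemma key1 (k) (x y : X) : rho Xn d k x ≤ rho Xn d k y + Ek Xn d k x y := by
  by_cases hx : x ∈ interior (Xn k)
  · by_cases hy : y ∈ interior (Xn k)
    · have := rho_lip Xn d hd0 hdc hdt k hx hy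
      unfold Ek; rw [if_pos ⟨hx, hy⟩]; exact this
    · have hE : Ek Xn d k x y = 2 := by unfold Ek; rw [if_neg (by tauto)]
      have h1 := rho_le_one Xn d hd0 hdc hdt k x
      have h2 := rho_nonneg Xn d hd0 hdc hdt k y
      rw [hE]; linarith
  · rw [rho_of_not_mem Xn d hd0 hdc hdt k hx]
    exact add_nonneg (rho_nonneg Xn d hd0 hdc hdt k y) (Ek_nonneg Xn d hd0 hdc hdt k x y)

lemma key2 (k) (x y z : X) :
    min (Ek Xn d k x z) (rho Xn d k x + rho Xn d k z) ≤ Ek Xn d k x y + Ek Xn d k y z := by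
  by_cases hall : x ∈ interior (Xn k) ∧ y ∈ interior (Xn k) ∧ z ∈ interior (Xn k)
  · obtain ⟨hx, hy, hz⟩ := hall
    have hE : Ek Xn d k x z = min 1 (sd Xn d k x z) := by unfold Ek; rw [if_pos ⟨hx, hz⟩]
    have hE1 : Ek Xn d k x y = min 1 (sd Xn d k x y) := by unfold Ek; rw [if_pos ⟨hx, hy⟩]
    have hE2 : Ek Xn d k y z = min 1 (sd Xn d k y z) := by unfold Ek; rw [if_pos ⟨hy, hz⟩]
    refine le_trans (min_le_left _ _) ?_
    rw [hE, hE1, hE2]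
    exact min1_add (sd_triangle Xn d hd0 hdc hdt k (interior_subset hx) (interior_subset hy)
        (interior_subset hz))
      (sd_nonneg Xn d hd0 hdc hdt k x y) (sd_nonneg Xn d hd0 hdc hdt k y z)
  · have h2 : (2:ℝ) ≤ Ek Xn d k x y + Ek Xn d k y z := by
      by_cases hy : y ∈ interior (Xn k)
      · by_cases hx : x ∈ interior (Xn k)
        · have hz : z ∉ interior (Xn k) := by tauto
          have : Ek Xn d k y z = 2 := by unfold Ek; rw [if_neg (by tauto)]
          have := Ek_nonneg Xn d hd0 hdc hdt k x y
          linarith [show Ek Xn d k y z = 2 by unfold Ek; rw [if_neg (by tauto)]]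
        · have : Ek Xn d k x y = 2 := by unfold Ek; rw [if_neg (by tauto)]
          have h0 := Ek_nonneg Xn d hd0 hdc hdt k y z
          linarith
      · have e1 : Ek Xn d k x y = 2 := by unfold Ek; rw [if_neg (by tauto)]
        have e2 : Ek Xn d k y z = 2 := by unfold Ek; rw [if_neg (by tauto)]
        rw [e1, e2]; norm_num
    have h3 : rho Xn d k x + rho Xn d k z ≤ 2 := by
      have := rho_le_one Xn d hd0 hdc hdt k x
      have := rho_le_one Xn d hd0 hdc hdt k z
      linarith
    exact le_trans (min_le_right _ _) (le_trans h3 h2)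

lemma Dk_triangle (k) (x y z : X) :
    Dk Xn d k x z ≤ Dk Xn d k x y + Dk Xn d k y z := by
  have hρnn := rho_nonneg Xn d hd0 hdc hdt k
  unfold Dk
  rcases le_total (Ek Xn d k x y) (rho Xn d k x + rho Xn d k y) with h1 | h1 <;>
    rcases le_total (Ek Xn d k y z) (rho Xn d k y + rho Xn d k z) with h2 | h2
  · rw [min_eq_left h1, min_eq_left h2]
    exact key2 Xn d hd0 hdc hdt k x y z
  · rw [min_eq_left h1, min_eq_right h2]
    have hxy : rho Xn d k x ≤ rho Xn d k y + Ek Xn d k x y := key1 Xn d hd0 hdc hdt k x y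
    refine le_trans (min_le_right _ _) ?_
    linarith
  · rw [min_eq_right h1, min_eq_left h2]
    have hzy : rho Xn d k z ≤ rho Xn d k y + Ek Xn d k z y := key1 Xn d hd0 hdc hdt k z y
    rw [Ek_comm Xn d hd0 hdc hdt k z y] at hzy
    refine le_trans (min_le_right _ _) ?_
    linarith
  · rw [min_eq_right h1, min_eq_right h2]
    refine le_trans (min_le_right _ _) ?_
    linarith [hρnn y]

lemma DD_summable (x y : X) : Summable (fun k => (1/2 : ℝ)^k * Dk Xn d k x y) := by
  refine Summable.of_nonneg_of_le
    (fun k => mul_nonneg (by positivity) (Dk_nonneg Xn d hd0 hdc hdt k x y))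
    (fun k => ?_) (summable_geometric_two.mul_right 2)
  calc (1/2 : ℝ)^k * Dk Xn d k x y ≤ (1/2:ℝ)^k * 2 :=
        mul_le_mul_of_nonneg_left (Dk_le_two Xn d hd0 hdc hdt k x y) (by positivity)
  _ = (1/2:ℝ)^k * 2 := rfl

lemma DD_self (x : X) : DD Xn d x x = 0 := by
  unfold DD
  have : (fun k => (1/2 : ℝ)^k * Dk Xn d k x x) = fun k => 0 := by
    funext k; rw [Dk_self Xn d hd0 hdc hdt k x, mul_zero]
  rw [this, tsum_zero]

lemma DD_comm (x y : X) : DD Xn d x y = DD Xn d y x := by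
  unfold DD
  exact tsum_congr fun k => by rw [Dk_comm Xn d hd0 hdc hdt k x y]

lemma DD_triangle (x y z : X) : DD Xn d x z ≤ DD Xn d x y + DD Xn d y z := by
  unfold DD
  rw [← Summable.tsum_add (DD_summable Xn d hd0 hdc hdt x y) (DD_summable Xn d hd0 hdc hdt y z)]
  refine Summable.tsum_le_tsum (fun k => ?_) (DD_summable Xn d hd0 hdc hdt x z)
    ((DD_summable Xn d hd0 hdc hdt x y).add (DD_summable Xn d hd0 hdc hdt y z))
  have := Dk_triangle Xn d hd0 hdc hdt k x y z
  have hp : (0:ℝ) ≤ (1/2:ℝ)^k := by positivity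
  nlinarith

lemma DD_ge (k) (x y : X) : (1/2 : ℝ)^k * Dk Xn d k x y ≤ DD Xn d x y :=
  Summable.le_tsum (DD_summable Xn d hd0 hdc hdt x y) k
    (fun j _ => mul_nonneg (by positivity) (Dk_nonneg Xn d hd0 hdc hdt j x y))

lemma DD_nonneg (x y : X) : 0 ≤ DD Xn d x y :=
  tsum_nonneg fun k => mul_nonneg (by positivity) (Dk_nonneg Xn d hd0 hdc hdt k x y)

lemma Dk_small (k) {x y : X} (hx : x ∈ interior (Xn k)) {δ : ℝ}
    (hδρ : δ ≤ rho Xn d k x) (hδ1 : δ ≤ 1) (h : Dk Xn d k x y < δ) :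
    ∃ hy : y ∈ interior (Xn k), sd Xn d k x y < δ := by
  by_cases hy : y ∈ interior (Xn k)
  · refine ⟨hy, ?_⟩
    have hE : Ek Xn d k x y = min 1 (sd Xn d k x y) := by unfold Ek; rw [if_pos ⟨hx, hy⟩]
    have hsum : δ ≤ rho Xn d k x + rho Xn d k y := by
      have := rho_nonneg Xn d hd0 hdc hdt k y; linarith
    have hmin : min 1 (sd Xn d k x y) < δ := by
      unfold Dk at h
      rcases min_lt_iff.1 h with h' | h'
      · rwa [hE] at h'
      · linarith
    by_contra hcon
    push_neg at hcon
    have : min 1 δ ≤ min 1 (sd Xn d k x y) := min_le_min le_rfl hcon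
    rw [min_eq_right hδ1] at this
    linarith
  · exfalso
    have hρy : rho Xn d k y = 0 := rho_of_not_mem Xn d hd0 hdc hdt k hy
    have hE : Ek Xn d k x y = 2 := by unfold Ek; rw [if_neg (by tauto)]
    unfold Dk at h
    rw [hE, hρy, add_zero] at h
    have : δ ≤ min 2 (rho Xn d k x) := le_min (by linarith) hδρ
    linarith

variable (hdopen : ∀ k (s : Set (Xn k)), IsOpen s ↔ ∀ a ∈ s, ∃ ε > 0, ∀ b, d k a b < ε → b ∈ s)

include hdopen

lemma rho_pos (k : ℕ) {x : X} (hx : x ∈ interior (Xn k)) : 0 < rho Xn d k x := by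
  unfold rho
  rw [if_pos hx]
  split_ifs with hne
  · have hS : IsOpen (Subtype.val ⁻¹' (interior (Xn k)) : Set (Xn k)) :=
      isOpen_interior.preimage continuous_subtype_val
    obtain ⟨ε, hε, hb⟩ := (hdopen k _).1 hS ⟨x, interior_subset hx⟩ hx
    have hlow : ε ≤ sInf ((fun b => sd Xn d k x b) '' (Xn k \ interior (Xn k))) := by
      apply le_csInf (hne.image _)
      rintro r ⟨b, hbmem, rfl⟩
      show ε ≤ sd Xn d k x b
      rw [sd_mem Xn d hd0 hdc hdt k (interior_subset hx) hbmem.1]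
      by_contra hcon
      push_neg at hcon
      exact hbmem.2 (hb ⟨b, hbmem.1⟩ hcon)
    exact lt_min one_pos (lt_of_lt_of_le hε hlow)
  · norm_num

lemma ball_open (k : ℕ) (a : Xn k) (δ : ℝ) : IsOpen {b : Xn k | d k a b < δ} := by
  rw [hdopen k]
  intro b0 hb0
  simp only [mem_setOf_eq] at hb0
  refine ⟨δ - d k a b0, by linarith, fun b hb => ?_⟩
  have := hdt k a b0 b
  simp only [mem_setOf_eq]
  linarith

lemma Dk_nhds (k : ℕ) (hXc : IsClosed (Xn k)) (x : X) {δ : ℝ} (hδ : 0 < δ) :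
    {y | Dk Xn d k x y < δ} ∈ 𝓝 x := by
  by_cases hxk : x ∈ Xn k
  · by_cases hxu : x ∈ interior (Xn k)
    · -- x in the interior : use a metric ball
      have hball : IsOpen {b : Xn k | d k ⟨x, hxk⟩ b < δ} :=
        ball_open Xn d hd0 hdc hdt hdopen k ⟨x, hxk⟩ δ
      rw [isOpen_induced_iff] at hball
      obtain ⟨V, hV, hVeq⟩ := hball
      have hxV : x ∈ V := by
        have : (⟨x, hxk⟩ : Xn k) ∈ Subtype.val ⁻¹' V := by
          rw [hVeq]; simp only [mem_setOf_eq, hd0 k]; exact hδ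
        exact this
      refine mem_of_superset ((hV.inter isOpen_interior).mem_nhds ⟨hxV, hxu⟩) ?_
      rintro y ⟨hyV, hyU⟩
      have hyk : y ∈ Xn k := interior_subset hyU
      have hdxy : d k ⟨x, hxk⟩ ⟨y, hyk⟩ < δ := by
        have h1 : (⟨y, hyk⟩ : Xn k) ∈ Subtype.val ⁻¹' V := hyV
        rw [hVeq] at h1; exact h1
      have hsd : sd Xn d k x y < δ := by
        rw [sd_mem Xn d hd0 hdc hdt k hxk hyk]; exact hdxy
      show Dk Xn d k x y < δ
      calc Dk Xn d k x y ≤ Ek Xn d k x y := min_le_left _ _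
        _ = min 1 (sd Xn d k x y) := by unfold Ek; rw [if_pos ⟨hxu, hyU⟩]
        _ ≤ sd Xn d k x y := min_le_right _ _
        _ < δ := hsd
    · -- x on the boundary
      have hρx : rho Xn d k x = 0 := rho_of_not_mem Xn d hd0 hdc hdt k hxu
      set δ' := min δ 1 with hδ'def
      have hδ'pos : 0 < δ' := lt_min hδ one_pos
      have hcl : IsClosed (Subtype.val '' {b : Xn k | ¬ d k ⟨x, hxk⟩ b < δ'}) := by
        have h1 : IsClosed {b : Xn k | ¬ d k ⟨x, hxk⟩ b < δ'} := by
          have := (ball_open Xn d hd0 hdc hdt hdopen k ⟨x, hxk⟩ δ').isClosed_compl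
          simpa [compl_setOf] using this
        exact (hXc.isClosedEmbedding_subtypeVal).isClosedMap _ h1
      have hxN : x ∈ (Subtype.val '' {b : Xn k | ¬ d k ⟨x, hxk⟩ b < δ'})ᶜ := by
        rintro ⟨b, hb, hbx⟩
        apply hb
        have : b = ⟨x, hxk⟩ := Subtype.ext hbx
        rw [this, hd0 k]
        exact hδ'pos
      refine mem_of_superset (hcl.isOpen_compl.mem_nhds hxN) fun y hy => ?_
      show Dk Xn d k x y < δ
      by_cases hyu : y ∈ interior (Xn k)
      · have hyk : y ∈ Xn k := interior_subset hyu
        have hdxy : d k ⟨x, hxk⟩ ⟨y, hyk⟩ < δ' := by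
          by_contra hcon
          exact hy ⟨⟨y, hyk⟩, hcon, rfl⟩
        have hρy : rho Xn d k y ≤ sd Xn d k y x :=
          rho_le_sd_boundary Xn d hd0 hdc hdt k ⟨hxk, hxu⟩ y
        rw [sd_comm Xn d hd0 hdc hdt k y x, sd_mem Xn d hd0 hdc hdt k hxk hyk] at hρy
        calc Dk Xn d k x y ≤ rho Xn d k x + rho Xn d k y := min_le_right _ _
          _ = rho Xn d k y := by rw [hρx, zero_add]
          _ ≤ d k ⟨x, hxk⟩ ⟨y, hyk⟩ := hρy
          _ < δ' := hdxy
          _ ≤ δ := min_le_left _ _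
      · have hρy : rho Xn d k y = 0 := rho_of_not_mem Xn d hd0 hdc hdt k hyu
        calc Dk Xn d k x y ≤ rho Xn d k x + rho Xn d k y := min_le_right _ _
          _ = 0 := by rw [hρx, hρy, add_zero]
          _ < δ := hδ
  · -- x not even in Xn k
    have hxu : x ∉ interior (Xn k) := fun h => hxk (interior_subset h)
    have hρx : rho Xn d k x = 0 := rho_of_not_mem Xn d hd0 hdc hdt k hxu
    refine mem_of_superset (hXc.isOpen_compl.mem_nhds hxk) fun y hy => ?_
    have hyu : y ∉ interior (Xn k) := fun h => hy (interior_subset h)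
    have hρy : rho Xn d k y = 0 := rho_of_not_mem Xn d hd0 hdc hdt k hyu
    show Dk Xn d k x y < δ
    calc Dk Xn d k x y ≤ rho Xn d k x + rho Xn d k y := min_le_right _ _
      _ = 0 := by rw [hρx, hρy, add_zero]
      _ < δ := hδ

lemma DD_char (hXc : ∀ k, IsClosed (Xn k)) (hcov : ∀ x : X, ∃ k, x ∈ interior (Xn k))
    (s : Set X) : IsOpen s ↔ ∀ x ∈ s, ∃ ε > 0, ∀ y, DD Xn d x y < ε → y ∈ s := by
  constructor
  · intro hs x hxs
    obtain ⟨k, hxu⟩ := hcov x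
    have hopen : IsOpen (Subtype.val ⁻¹' (s ∩ interior (Xn k)) : Set (Xn k)) :=
      (hs.inter isOpen_interior).preimage continuous_subtype_val
    obtain ⟨ε₁, hε₁, hb⟩ := (hdopen k _).1 hopen ⟨x, interior_subset hxu⟩ ⟨hxs, hxu⟩
    set δ := min (min ε₁ 1) (rho Xn d k x) with hδdef
    have hδpos : 0 < δ :=
      lt_min (lt_min hε₁ one_pos) (rho_pos Xn d hd0 hdc hdt hdopen k hxu)
    refine ⟨(1/2:ℝ)^k * δ, by positivity, fun y hy => ?_⟩
    have hDk : Dk Xn d k x y < δ := by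
      have h1 := DD_ge Xn d hd0 hdc hdt k x y
      have hpow : (0:ℝ) < (1/2:ℝ)^k := by positivity
      nlinarith
    obtain ⟨hyu, hsd⟩ := Dk_small Xn d hd0 hdc hdt k hxu (min_le_right _ _)
      (le_trans (min_le_left _ _) (min_le_right _ _)) hDk
    have hyk : y ∈ Xn k := interior_subset hyu
    have hdy : d k ⟨x, interior_subset hxu⟩ ⟨y, hyk⟩ < ε₁ := by
      rw [← sd_mem Xn d hd0 hdc hdt k (interior_subset hxu) hyk]
      calc sd Xn d k x y < δ := hsd
        _ ≤ ε₁ := le_trans (min_le_left _ _) (min_le_left _ _)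
    exact (hb ⟨y, hyk⟩ hdy).1
  · intro H
    rw [isOpen_iff_mem_nhds]
    intro x hxs
    obtain ⟨ε, hε, hb⟩ := H x hxs
    obtain ⟨m, hmlt⟩ := exists_pow_lt_of_lt_one (show (0:ℝ) < ε/4 by linarith)
      (by norm_num : (1/2:ℝ) < 1)
    set δ' := ε/(2*((m:ℝ)+1)) with hδ'def
    have hδ'pos : 0 < δ' := by positivity
    have hN : (⋂ i ∈ Finset.range (m+1), {y | Dk Xn d i x y < δ'}) ∈ 𝓝 x :=
      (Filter.biInter_finset_mem _).2 fun i _ =>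
        Dk_nhds Xn d hd0 hdc hdt hdopen i (hXc i) x hδ'pos
    refine mem_of_superset hN fun y hy => hb y ?_
    simp only [Finset.mem_range, mem_iInter, mem_setOf_eq] at hy
    have hsum := DD_summable Xn d hd0 hdc hdt x y
    have hsplit := Summable.sum_add_tsum_nat_add (f := fun k => (1/2:ℝ)^k * Dk Xn d k x y) (m+1) hsum
    have hA : ∑ i ∈ Finset.range (m+1), (1/2:ℝ)^i * Dk Xn d i x y ≤ ((m:ℝ)+1) * δ' := by
      calc ∑ i ∈ Finset.range (m+1), (1/2:ℝ)^i * Dk Xn d i x y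
          ≤ ∑ _i ∈ Finset.range (m+1), δ' := by
            refine Finset.sum_le_sum fun i hi => ?_
            have h1 : (1/2:ℝ)^i ≤ 1 := pow_le_one₀ (by norm_num) (by norm_num)
            have h2 : Dk Xn d i x y < δ' := hy i (Finset.mem_range.1 hi)
            have h3 : 0 ≤ Dk Xn d i x y := Dk_nonneg Xn d hd0 hdc hdt i x y
            nlinarith
        _ = ((m:ℝ)+1) * δ' := by
            rw [Finset.sum_const, Finset.card_range]
            push_cast; ring
    have hB : ∑' i : ℕ, (1/2:ℝ)^(i+(m+1)) * Dk Xn d (i+(m+1)) x y ≤ 4*(1/2:ℝ)^(m+1) := by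
      have htail : Summable (fun i : ℕ => (1/2:ℝ)^(i+(m+1)) * Dk Xn d (i+(m+1)) x y) :=
        (summable_nat_add_iff (f := fun k => (1/2:ℝ)^k * Dk Xn d k x y) (m+1)).2 hsum
      have hle : ∀ i : ℕ, (1/2:ℝ)^(i+(m+1)) * Dk Xn d (i+(m+1)) x y
          ≤ 2*(1/2:ℝ)^(m+1) * (1/2:ℝ)^i := by
        intro i
        have h1 : (0:ℝ) ≤ (1/2:ℝ)^(i+(m+1)) := by positivity
        have h2 := Dk_le_two Xn d hd0 hdc hdt (i+(m+1)) x y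
        have h3 : (1/2:ℝ)^(i+(m+1)) = (1/2:ℝ)^i * (1/2:ℝ)^(m+1) := pow_add _ _ _
        nlinarith [Dk_nonneg Xn d hd0 hdc hdt (i+(m+1)) x y]
      calc ∑' i : ℕ, (1/2:ℝ)^(i+(m+1)) * Dk Xn d (i+(m+1)) x y
          ≤ ∑' i : ℕ, 2*(1/2:ℝ)^(m+1) * (1/2:ℝ)^i :=
            Summable.tsum_le_tsum hle htail (summable_geometric_two.mul_left _)
        _ = 2*(1/2:ℝ)^(m+1) * ∑' i : ℕ, (1/2:ℝ)^i := tsum_mul_left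
        _ = 4*(1/2:ℝ)^(m+1) := by rw [tsum_geometric_two]; ring
    have hDD : DD Xn d x y < ε := by
      have h4 : ((m:ℝ)+1) * δ' = ε/2 := by
        rw [hδ'def]; field_simp
      have h5 : (4:ℝ)*(1/2:ℝ)^(m+1) < ε/2 := by
        have : (1/2:ℝ)^(m+1) = (1/2:ℝ)^m * (1/2:ℝ) := pow_succ _ _
        rw [this]; linarith
      have h6 : DD Xn d x y = ∑ i ∈ Finset.range (m+1), (1/2:ℝ)^i * Dk Xn d i x y
          + ∑' i : ℕ, (1/2:ℝ)^(i+(m+1)) * Dk Xn d (i+(m+1)) x y := by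
        rw [hsplit]; rfl
      rw [h6]
      calc ∑ i ∈ Finset.range (m+1), (1/2:ℝ)^i * Dk Xn d i x y
            + ∑' i : ℕ, (1/2:ℝ)^(i+(m+1)) * Dk Xn d (i+(m+1)) x y
          ≤ ((m:ℝ)+1) * δ' + 4*(1/2:ℝ)^(m+1) := add_le_add hA hB
        _ < ε := by rw [h4]; linarith
    exact hDD

lemma DD_eq_zero (hdeq : ∀ k a b, d k a b = 0 → a = b) (hmono : Monotone Xn)
    (hcov : ∀ x : X, ∃ k, x ∈ interior (Xn k)) {x y : X} (h : DD Xn d x y = 0) : x = y := by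
  obtain ⟨k1, h1⟩ := hcov x
  obtain ⟨k2, h2⟩ := hcov y
  set k := max k1 k2 with hk
  have hx : x ∈ interior (Xn k) := interior_mono (hmono (le_max_left _ _)) h1
  have hy : y ∈ interior (Xn k) := interior_mono (hmono (le_max_right _ _)) h2
  by_contra hne
  have hd : 0 < d k ⟨x, interior_subset hx⟩ ⟨y, interior_subset hy⟩ := by
    rcases (d_nonneg Xn d hd0 hdc hdt k ⟨x, interior_subset hx⟩
        ⟨y, interior_subset hy⟩).lt_or_eq with h' | h'
    · exact h'
    · exact absurd (congrArg Subtype.val (hdeq k _ _ h'.symm)) hne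
  have hsd : 0 < sd Xn d k x y := by
    rw [sd_mem Xn d hd0 hdc hdt k (interior_subset hx) (interior_subset hy)]; exact hd
  have hE : 0 < Ek Xn d k x y := by
    unfold Ek; rw [if_pos ⟨hx, hy⟩]; exact lt_min one_pos hsd
  have hρ : 0 < rho Xn d k x + rho Xn d k y :=
    add_pos (rho_pos Xn d hd0 hdc hdt hdopen k hx) (rho_pos Xn d hd0 hdc hdt hdopen k hy)
  have hDk : 0 < Dk Xn d k x y := lt_min hE hρ
  have hge := DD_ge Xn d hd0 hdc hdt k x y
  have hpow : (0:ℝ) < (1/2:ℝ)^k := by positivity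
  rw [h] at hge
  nlinarith

end axioms

omit [TopologicalSpace X] in
lemma metric_isOpen_iff {Y : Type*} (m : MetricSpace Y) (s : Set Y) :
    IsOpen[m.toUniformSpace.toTopologicalSpace] s ↔
      ∀ a ∈ s, ∃ ε > 0, ∀ b, @dist _ m.toPseudoMetricSpace.toDist a b < ε → b ∈ s := by
  letI := m
  rw [Metric.isOpen_iff]
  constructor
  · intro h a ha
    obtain ⟨ε, hε, hb⟩ := h a ha
    exact ⟨ε, hε, fun b hb' => hb (by rwa [Metric.mem_ball, dist_comm])⟩
  · intro h a ha
    obtain ⟨ε, hε, hb⟩ := h a ha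
    refine ⟨ε, hε, fun b hb' => hb b ?_⟩
    rw [Metric.mem_ball] at hb'
    rwa [dist_comm]

lemma exists_interior_mem [FirstCountableTopology X]
    (habs : ∀ (u : ℕ → X) (x : X), Tendsto u atTop (𝓝 x) → ∃ k, ∀ n, u n ∈ Xn k) (x : X) :
    ∃ k, x ∈ interior (Xn k) := by
  obtain ⟨V, hV⟩ := (𝓝 x).exists_antitone_basis
  by_contra hcon
  push_neg at hcon
  have h' : ∀ k : ℕ, ∃ y, y ∈ V k ∧ y ∉ Xn k := by
    intro k
    by_contra hc
    push_neg at hc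
    exact hcon k (mem_interior_iff_mem_nhds.2 (hV.toHasBasis.mem_iff.2 ⟨k, trivial, hc⟩))
  choose u hu1 hu2 using h'
  obtain ⟨k, hk⟩ := habs u x (hV.tendsto hu1)
  exact hu2 k (hk k)

end SeqAbsorbAux

open SeqAbsorbAux in
theorem seq_absorbing_metrizable_pieces_metrizable
    {X : Type*} [TopologicalSpace X] [FirstCountableTopology X]
    (Xn : ℕ → Set X)
    (hcover : (⋃ n, Xn n) = Set.univ)
    (hclosed : ∀ n, IsClosed (Xn n))
    (hmono : Monotone Xn)
    (habs : ∀ (u : ℕ → X) (x : X), Tendsto u atTop (𝓝 x) →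
      ∃ k, ∀ n, u n ∈ Xn k)
    (hm : ∀ n, TopologicalSpace.MetrizableSpace (Xn n)) :
    TopologicalSpace.MetrizableSpace X := by
  classical
  have hMex : ∀ k, ∃ mk : MetricSpace (Xn k),
      mk.toUniformSpace.toTopologicalSpace = instTopologicalSpaceSubtype :=
    fun k => ⟨@TopologicalSpace.metrizableSpaceMetric _ _ (hm k), rfl⟩
  choose M hM using hMex
  set d : ∀ k, Xn k → Xn k → ℝ := fun k a b => @dist _ (M k).toPseudoMetricSpace.toDist a b
    with hddef
  have hd0 : ∀ k a, d k a a = 0 := fun k a => @dist_self _ (M k).toPseudoMetricSpace a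
  have hdc : ∀ k a b, d k a b = d k b a := fun k a b => @dist_comm _ (M k).toPseudoMetricSpace a b
  have hdt : ∀ k a b c, d k a c ≤ d k a b + d k b c :=
    fun k a b c => @dist_triangle _ (M k).toPseudoMetricSpace a b c
  have hdeq : ∀ k a b, d k a b = 0 → a = b :=
    fun k a b h => @eq_of_dist_eq_zero _ (M k) a b h
  have hdopen : ∀ k (s : Set (Xn k)), IsOpen s ↔ ∀ a ∈ s, ∃ ε > 0, ∀ b, d k a b < ε → b ∈ s := by
    intro k s
    rw [← hM k]
    exact metric_isOpen_iff (M k) s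
  have hcov : ∀ x : X, ∃ k, x ∈ interior (Xn k) := exists_interior_mem Xn habs
  letI m : MetricSpace X := MetricSpace.ofDistTopology (DD Xn d)
    (DD_self Xn d hd0 hdc hdt) (DD_comm Xn d hd0 hdc hdt) (DD_triangle Xn d hd0 hdc hdt)
    (DD_char Xn d hd0 hdc hdt hdopen hclosed hcov)
    (fun x y h => DD_eq_zero Xn d hd0 hdc hdt hdopen hdeq hmono hcov h)
  exact UniformSpace.metrizableSpace
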